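/- Let (R, m) be a local ring and A a finite abelian group of order d such that d is invertible in R. Let R[A] be the group algebra with counit ε, comultiplication Δ, and antipode σ (λ ↦ λ^{-1} extended R-linearly). Let I ⊆ R[A] be an ideal with ε(I) = 0, σ(I) ⊆ I, and Δ(I) ⊆ I ⊗ R[A] + R[A] ⊗ I. If g, g' ∈ R[A] both satisfy ε(g) = ε(g') = 1, Δ(g) − g ⊗ g ∈ I ⊗ R[A] + R[A] ⊗ I, Δ(g') − g' ⊗ g' ∈ I ⊗ R[A] + R[A] ⊗ I, and g − g' ∈ m·R[A] + I, then g − g' ∈ I. In other words, the reduction map from R[A]/I to its fiber over the residue field is injective on group-like elements. -/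

import Mathlib

open TensorProduct

/-- The counit of the group algebra `R[A]`: the sum of the coefficients (the `R`-linear
extension of `λ ↦ 1`). -/
noncomputable def groupAlgebraCounit (R A : Type*) [CommRing R] [AddCommGroup A]
    (x : AddMonoidAlgebra R A) : R :=
  x.coeff.sum fun _ r => r

/-- The comultiplication of the group algebra `R[A]`: the `R`-linear extension of
`λ ↦ λ ⊗ λ`. -/
noncomputable def groupAlgebraComul (R A : Type*) [CommRing R] [AddCommGroup A]
    (x : AddMonoidAlgebra R A) :
    AddMonoidAlgebra R A ⊗[R] AddMonoidAlgebra R A :=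
  x.coeff.sum fun a r =>
    r • (AddMonoidAlgebra.single a 1 ⊗ₜ[R] AddMonoidAlgebra.single a 1)

/-- The antipode of the group algebra `R[A]`: the `R`-linear extension of `λ ↦ λ⁻¹`. -/
noncomputable def groupAlgebraAntipode (R A : Type*) [CommRing R] [AddCommGroup A]
    (x : AddMonoidAlgebra R A) : AddMonoidAlgebra R A :=
  AddMonoidAlgebra.ofCoeff (Finsupp.mapDomain Neg.neg x.coeff)

/-- The `R`-submodule `I ⊗ R[A] + R[A] ⊗ I` of `R[A] ⊗_R R[A]`: the span of the simple
tensors having one factor in `I`. -/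
noncomputable def groupAlgebraMixedTensor (R A : Type*) [CommRing R] [AddCommGroup A]
    (I : Ideal (AddMonoidAlgebra R A)) :
    Submodule R (AddMonoidAlgebra R A ⊗[R] AddMonoidAlgebra R A) :=
  Submodule.span R
    ({t | ∃ a ∈ I, ∃ b, t = a ⊗ₜ[R] b} ∪ {t | ∃ a, ∃ b ∈ I, t = a ⊗ₜ[R] b})

section Aux

variable (R A : Type*) [CommRing R] [AddCommGroup A]

local notation "H" => AddMonoidAlgebra R A

/-- counit as an algebra hom -/
noncomputable def gaCounitA : H →ₐ[R] R := AddMonoidAlgebra.lift R R A 1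

lemma gaCounitA_eq (x : H) : gaCounitA R A x = groupAlgebraCounit R A x := by
  rw [gaCounitA, AddMonoidAlgebra.lift_apply]
  simp [groupAlgebraCounit]

/-- the diagonal monoid hom -/
noncomputable def gaDiag : Multiplicative A →* (H ⊗[R] H) where
  toFun a := AddMonoidAlgebra.single a.toAdd 1 ⊗ₜ[R] AddMonoidAlgebra.single a.toAdd 1
  map_one' := by
    rw [Algebra.TensorProduct.one_def]
    rfl
  map_mul' a b := by
    rw [Algebra.TensorProduct.tmul_mul_tmul, AddMonoidAlgebra.single_mul_single, one_mul]
    rfl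

/-- comultiplication as an algebra hom -/
noncomputable def gaComulA : H →ₐ[R] (H ⊗[R] H) :=
  AddMonoidAlgebra.lift R _ A (gaDiag R A)

lemma gaComulA_eq (x : H) : gaComulA R A x = groupAlgebraComul R A x := by
  rw [gaComulA, AddMonoidAlgebra.lift_apply]
  rfl

/-- antipode as an algebra hom -/
noncomputable def gaAntipodeA : H →ₐ[R] H :=
  AddMonoidAlgebra.lift R _ A
    { toFun := fun a => AddMonoidAlgebra.single (-a.toAdd) 1
      map_one' := by
        show AddMonoidAlgebra.single (-(1 : Multiplicative A).toAdd) 1 = 1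
        rw [show (-(1 : Multiplicative A).toAdd) = 0 by simp]; rfl
      map_mul' := fun a b => by
        rw [AddMonoidAlgebra.single_mul_single, one_mul]
        show AddMonoidAlgebra.single (-(a.toAdd + b.toAdd)) 1 = _
        rw [neg_add] }

lemma gaAntipodeA_eq (x : H) : gaAntipodeA R A x = groupAlgebraAntipode R A x := by
  rw [gaAntipodeA, AddMonoidAlgebra.lift_apply, groupAlgebraAntipode, Finsupp.mapDomain,
    AddMonoidAlgebra.ofCoeff_finsuppSum]
  refine Finset.sum_congr rfl fun a _ => ?_
  show x.coeff a • AddMonoidAlgebra.single (-a) 1 = _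
  rw [AddMonoidAlgebra.smul_single', mul_one]
  rfl

end Aux

section Hopf

variable {R A : Type*} [CommRing R] [AddCommGroup A] (I : Ideal (AddMonoidAlgebra R A))

local notation "H" => AddMonoidAlgebra R A
local notation "M" => groupAlgebraMixedTensor R A I

lemma tmul_mem_mixed_left {a b : H} (ha : a ∈ I) : a ⊗ₜ[R] b ∈ M :=
  Submodule.subset_span (Or.inl ⟨a, ha, b, rfl⟩)

lemma tmul_mem_mixed_right {a b : H} (hb : b ∈ I) : a ⊗ₜ[R] b ∈ M :=
  Submodule.subset_span (Or.inr ⟨a, b, hb, rfl⟩)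

lemma mixed_mul_mem {t : H ⊗[R] H} (ht : t ∈ M) (s : H ⊗[R] H) : s * t ∈ M := by
  induction ht using Submodule.span_induction with
  | mem x hx =>
      induction s using TensorProduct.induction_on with
      | zero => rw [zero_mul]; exact zero_mem _
      | tmul c d =>
          rcases hx with ⟨a, ha, b, rfl⟩ | ⟨a, b, hb, rfl⟩
          · rw [Algebra.TensorProduct.tmul_mul_tmul]
            exact tmul_mem_mixed_left I (I.mul_mem_left c ha)
          · rw [Algebra.TensorProduct.tmul_mul_tmul]
            exact tmul_mem_mixed_right I (I.mul_mem_left d hb)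
      | add u v hu hv => rw [add_mul]; exact add_mem hu hv
  | zero => rw [mul_zero]; exact zero_mem _
  | add u v hu hv h1 h2 => rw [mul_add]; exact add_mem h1 h2
  | smul r u hu h1 => rw [mul_smul_comm]; exact Submodule.smul_mem _ _ h1

lemma mixed_map_mem {f g : H →ₗ[R] H} (hf : ∀ x ∈ I, f x ∈ I) (hg : ∀ x ∈ I, g x ∈ I)
    {t : H ⊗[R] H} (ht : t ∈ M) : TensorProduct.map f g t ∈ M := by
  induction ht using Submodule.span_induction with
  | mem x hx =>
      rcases hx with ⟨a, ha, b, rfl⟩ | ⟨a, b, hb, rfl⟩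
      · rw [TensorProduct.map_tmul]; exact tmul_mem_mixed_left I (hf a ha)
      · rw [TensorProduct.map_tmul]; exact tmul_mem_mixed_right I (hg b hb)
  | zero => rw [map_zero]; exact zero_mem _
  | add u v hu hv h1 h2 => rw [map_add]; exact add_mem h1 h2
  | smul r u hu h1 => rw [map_smul]; exact Submodule.smul_mem _ _ h1

lemma mixed_collapse {f : H →ₗ[R] H} (hf : ∀ x ∈ I, f x ∈ I) {t : H ⊗[R] H} (ht : t ∈ M) :
    LinearMap.mul' R H (TensorProduct.map f LinearMap.id t) ∈ I := by
  induction ht using Submodule.span_induction with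
  | mem x hx =>
      rcases hx with ⟨a, ha, b, rfl⟩ | ⟨a, b, hb, rfl⟩
      · rw [TensorProduct.map_tmul, LinearMap.mul'_apply]
        exact I.mul_mem_right _ (hf a ha)
      · rw [TensorProduct.map_tmul, LinearMap.mul'_apply]
        exact I.mul_mem_left _ hb
  | zero => rw [map_zero, map_zero]; exact zero_mem _
  | add u v hu hv h1 h2 => rw [map_add, map_add]; exact add_mem h1 h2
  | smul r u hu h1 => rw [map_smul, map_smul]; exact Submodule.smul_of_tower_mem I r h1

variable (R A)

lemma comul_single (a : A) (r : R) :
    groupAlgebraComul R A (AddMonoidAlgebra.single a r)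
      = r • (AddMonoidAlgebra.single a 1 ⊗ₜ[R] AddMonoidAlgebra.single a 1) := by
  rw [groupAlgebraComul, AddMonoidAlgebra.coeff_single, Finsupp.sum_single_index]
  rw [zero_smul]

lemma counit_single (a : A) (r : R) :
    groupAlgebraCounit R A (AddMonoidAlgebra.single a r) = r := by
  rw [groupAlgebraCounit, AddMonoidAlgebra.coeff_single, Finsupp.sum_single_index rfl]

lemma antipode_single (a : A) (r : R) :
    groupAlgebraAntipode R A (AddMonoidAlgebra.single a r)
      = AddMonoidAlgebra.single (-a) r := by
  rw [groupAlgebraAntipode, AddMonoidAlgebra.coeff_single, Finsupp.mapDomain_single,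
    AddMonoidAlgebra.ofCoeff_single]

/-- the `n`-th power operation `λ ↦ λ^n` extended linearly -/
noncomputable def gaPsi (n : ℕ) : AddMonoidAlgebra R A →ₗ[R] AddMonoidAlgebra R A :=
  AddMonoidAlgebra.mapDomainLinearMap R R (fun a => n • a)

lemma gaPsi_single (n : ℕ) (a : A) (r : R) :
    gaPsi R A n (AddMonoidAlgebra.single a r) = AddMonoidAlgebra.single (n • a) r := by
  exact AddMonoidAlgebra.mapDomainLinearMap_single _ _ _

end Hopf

section Identities

variable (R A : Type*) [CommRing R] [AddCommGroup A]

local notation "H" => AddMonoidAlgebra R A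

noncomputable def gaCounitL : H →ₗ[R] R := (gaCounitA R A).toLinearMap
noncomputable def gaComulL : H →ₗ[R] (H ⊗[R] H) := (gaComulA R A).toLinearMap
noncomputable def gaAntipodeL : H →ₗ[R] H := (gaAntipodeA R A).toLinearMap

lemma gaCounitL_eq (x : H) : gaCounitL R A x = groupAlgebraCounit R A x := gaCounitA_eq R A x
lemma gaComulL_eq (x : H) : gaComulL R A x = groupAlgebraComul R A x := gaComulA_eq R A x
lemma gaAntipodeL_eq (x : H) : gaAntipodeL R A x = groupAlgebraAntipode R A x :=
  gaAntipodeA_eq R A x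

lemma gaCounit_antipode (x : H) :
    groupAlgebraCounit R A (groupAlgebraAntipode R A x) = groupAlgebraCounit R A x := by
  rw [← gaCounitL_eq, ← gaCounitL_eq, ← gaAntipodeL_eq]
  refine LinearMap.congr_fun (AddMonoidAlgebra.lhom_ext'
    (f := (gaCounitL R A) ∘ₗ (gaAntipodeL R A)) (g := gaCounitL R A)
    fun a => LinearMap.ext_ring ?_) x
  simp only [LinearMap.comp_apply, AddMonoidAlgebra.lsingle_apply]
  rw [gaAntipodeL_eq, antipode_single, gaCounitL_eq, counit_single, gaCounitL_eq, counit_single]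

lemma gaComul_antipode (x : H) :
    groupAlgebraComul R A (groupAlgebraAntipode R A x)
      = TensorProduct.map (gaAntipodeL R A) (gaAntipodeL R A) (groupAlgebraComul R A x) := by
  rw [← gaComulL_eq, ← gaComulL_eq, ← gaAntipodeL_eq]
  refine LinearMap.congr_fun (AddMonoidAlgebra.lhom_ext'
    (f := (gaComulL R A) ∘ₗ (gaAntipodeL R A))
    (g := (TensorProduct.map (gaAntipodeL R A) (gaAntipodeL R A)) ∘ₗ (gaComulL R A))
    fun a => LinearMap.ext_ring ?_) x
  simp only [LinearMap.comp_apply, AddMonoidAlgebra.lsingle_apply]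
  rw [gaAntipodeL_eq, antipode_single, gaComulL_eq, comul_single, gaComulL_eq, comul_single,
    map_smul, TensorProduct.map_tmul, gaAntipodeL_eq, antipode_single]

lemma gaAntipode_convolution (x : H) :
    LinearMap.mul' R H (TensorProduct.map (gaAntipodeL R A) LinearMap.id
        (groupAlgebraComul R A x))
      = algebraMap R H (groupAlgebraCounit R A x) := by
  rw [← gaComulL_eq, ← gaCounitL_eq]
  refine LinearMap.congr_fun (AddMonoidAlgebra.lhom_ext'
    (f := (LinearMap.mul' R H) ∘ₗ (TensorProduct.map (gaAntipodeL R A) LinearMap.id)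
      ∘ₗ (gaComulL R A))
    (g := (Algebra.linearMap R H) ∘ₗ (gaCounitL R A))
    fun a => LinearMap.ext_ring ?_) x
  simp only [LinearMap.comp_apply, AddMonoidAlgebra.lsingle_apply, Algebra.linearMap_apply]
  rw [gaComulL_eq, comul_single, map_smul, TensorProduct.map_tmul, gaAntipodeL_eq,
    antipode_single, map_smul, LinearMap.mul'_apply, LinearMap.id_coe, id_eq,
    AddMonoidAlgebra.single_mul_single, neg_add_cancel, one_mul, gaCounitL_eq, counit_single]
  rw [AddMonoidAlgebra.coe_algebraMap, Function.comp_apply, Algebra.algebraMap_self_apply, one_smul]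

lemma gaPsi_succ (n : ℕ) (x : H) :
    gaPsi R A (n + 1) x
      = LinearMap.mul' R H (TensorProduct.map (gaPsi R A n) LinearMap.id
          (groupAlgebraComul R A x)) := by
  rw [← gaComulL_eq]
  refine LinearMap.congr_fun (AddMonoidAlgebra.lhom_ext'
    (f := gaPsi R A (n + 1))
    (g := (LinearMap.mul' R H) ∘ₗ (TensorProduct.map (gaPsi R A n) LinearMap.id)
      ∘ₗ (gaComulL R A))
    fun a => LinearMap.ext_ring ?_) x
  simp only [LinearMap.comp_apply, AddMonoidAlgebra.lsingle_apply]
  rw [gaPsi_single, gaComulL_eq, comul_single, map_smul, TensorProduct.map_tmul,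
    gaPsi_single, map_smul, LinearMap.mul'_apply, LinearMap.id_coe, id_eq,
    AddMonoidAlgebra.single_mul_single, one_mul, one_smul, succ_nsmul]

lemma gaPsi_zero (x : H) : gaPsi R A 0 x = algebraMap R H (groupAlgebraCounit R A x) := by
  rw [← gaCounitL_eq]
  refine LinearMap.congr_fun (AddMonoidAlgebra.lhom_ext'
    (f := gaPsi R A 0) (g := (Algebra.linearMap R H) ∘ₗ (gaCounitL R A))
    fun a => LinearMap.ext_ring ?_) x
  simp only [LinearMap.comp_apply, AddMonoidAlgebra.lsingle_apply, Algebra.linearMap_apply]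
  rw [gaPsi_single, zero_smul, gaCounitL_eq, counit_single,
    AddMonoidAlgebra.coe_algebraMap, Function.comp_apply, Algebra.algebraMap_self_apply]

lemma gaPsi_card [Fintype A] (x : H) :
    gaPsi R A (Fintype.card A) x = algebraMap R H (groupAlgebraCounit R A x) := by
  rw [← gaCounitL_eq]
  refine LinearMap.congr_fun (AddMonoidAlgebra.lhom_ext'
    (f := gaPsi R A (Fintype.card A)) (g := (Algebra.linearMap R H) ∘ₗ (gaCounitL R A))
    fun a => LinearMap.ext_ring ?_) x
  simp only [LinearMap.comp_apply, AddMonoidAlgebra.lsingle_apply, Algebra.linearMap_apply]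
  rw [gaPsi_single, card_nsmul_eq_zero, gaCounitL_eq, counit_single,
    AddMonoidAlgebra.coe_algebraMap, Function.comp_apply, Algebra.algebraMap_self_apply]

lemma gaCounit_mul (x y : H) :
    groupAlgebraCounit R A (x * y) = groupAlgebraCounit R A x * groupAlgebraCounit R A y := by
  rw [← gaCounitA_eq, ← gaCounitA_eq, ← gaCounitA_eq, map_mul]

lemma gaCounit_one : groupAlgebraCounit R A (1 : H) = 1 := by
  rw [← gaCounitA_eq, map_one]

lemma gaComul_mul (x y : H) :
    groupAlgebraComul R A (x * y) = groupAlgebraComul R A x * groupAlgebraComul R A y := by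
  rw [← gaComulA_eq, ← gaComulA_eq, ← gaComulA_eq, map_mul]

end Identities

section Consequences

variable {R A : Type*} [CommRing R] [AddCommGroup A] (I : Ideal (AddMonoidAlgebra R A))

local notation "H" => AddMonoidAlgebra R A
local notation "M" => groupAlgebraMixedTensor R A I

lemma gaPsi_mem (hcounit : ∀ x ∈ I, groupAlgebraCounit R A x = 0)
    (hcomul : ∀ x ∈ I, groupAlgebraComul R A x ∈ M) (n : ℕ) :
    ∀ x ∈ I, gaPsi R A n x ∈ I := by
  induction n with
  | zero =>
      intro x hx
      rw [gaPsi_zero, hcounit x hx, map_zero]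
      exact zero_mem _
  | succ n ih =>
      intro x hx
      rw [gaPsi_succ]
      exact mixed_collapse I ih (hcomul x hx)

lemma pow_sub_psi (hcounit : ∀ x ∈ I, groupAlgebraCounit R A x = 0)
    (hcomul : ∀ x ∈ I, groupAlgebraComul R A x ∈ M) {z : H}
    (hz1 : groupAlgebraCounit R A z = 1)
    (hz : groupAlgebraComul R A z - z ⊗ₜ[R] z ∈ M) (n : ℕ) :
    z ^ n - gaPsi R A n z ∈ I := by
  induction n with
  | zero =>
      rw [pow_zero, gaPsi_zero, hz1, map_one, sub_self]
      exact zero_mem _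
  | succ n ih =>
      have hc := mixed_collapse I (gaPsi_mem I hcounit hcomul n) hz
      rw [map_sub, map_sub, TensorProduct.map_tmul, LinearMap.mul'_apply, LinearMap.id_coe,
        id_eq, ← gaPsi_succ] at hc
      have e : z ^ (n + 1) - gaPsi R A (n + 1) z
          = (z ^ n - gaPsi R A n z) * z - (gaPsi R A (n + 1) z - gaPsi R A n z * z) := by
        rw [pow_succ]; ring
      rw [e]
      exact sub_mem (I.mul_mem_right z ih) hc

end Consequences

set_option maxHeartbeats 1000000 in
/-- Let `(R, m)` be a local ring and `A` a finite abelian group whose order is invertible in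
`R`, and let `I ⊆ R[A]` be a Hopf ideal.  If `g, g'` are group-like modulo
`I ⊗ R[A] + R[A] ⊗ I` and `g − g' ∈ m·R[A] + I`, then `g − g' ∈ I`: reduction modulo the
maximal ideal is injective on group-like elements of `R[A]/I`. -/
theorem stacky_covers_grouplike_reduction_injective (R A : Type*) [CommRing R] [IsLocalRing R]
    [AddCommGroup A] [Fintype A] (hd : IsUnit ((Fintype.card A : R)))
    (I : Ideal (AddMonoidAlgebra R A))
    (hcounit : ∀ x ∈ I, groupAlgebraCounit R A x = 0)
    (hantipode : ∀ x ∈ I, groupAlgebraAntipode R A x ∈ I)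
    (hcomul : ∀ x ∈ I, groupAlgebraComul R A x ∈ groupAlgebraMixedTensor R A I)
    (g g' : AddMonoidAlgebra R A)
    (hg1 : groupAlgebraCounit R A g = 1) (hg'1 : groupAlgebraCounit R A g' = 1)
    (hggl : groupAlgebraComul R A g - g ⊗ₜ[R] g ∈ groupAlgebraMixedTensor R A I)
    (hg'gl : groupAlgebraComul R A g' - g' ⊗ₜ[R] g' ∈ groupAlgebraMixedTensor R A I)
    (hgm : g - g' ∈
      Ideal.map (algebraMap R (AddMonoidAlgebra R A)) (IsLocalRing.maximalIdeal R) + I) :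
    g - g' ∈ I := by
  classical
  set z : AddMonoidAlgebra R A := groupAlgebraAntipode R A g' * g with hzdef
  -- counit of z is 1
  have hεz : groupAlgebraCounit R A z = 1 := by
    rw [hzdef, gaCounit_mul, gaCounit_antipode, hg'1, hg1, one_mul]
  -- z is group-like modulo the mixed tensor module
  have hSI : ∀ x ∈ I, gaAntipodeL R A x ∈ I := fun x hx => by
    rw [gaAntipodeL_eq]; exact hantipode x hx
  have hzgl : groupAlgebraComul R A z - z ⊗ₜ[R] z ∈ groupAlgebraMixedTensor R A I := by
    have e1 : groupAlgebraComul R A z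
        = (TensorProduct.map (gaAntipodeL R A) (gaAntipodeL R A) (groupAlgebraComul R A g'))
          * groupAlgebraComul R A g := by
      rw [hzdef, gaComul_mul, gaComul_antipode]
    have hm2' : TensorProduct.map (gaAntipodeL R A) (gaAntipodeL R A)
        (groupAlgebraComul R A g' - g' ⊗ₜ[R] g') ∈ groupAlgebraMixedTensor R A I :=
      mixed_map_mem I hSI hSI hg'gl
    have e3 : z ⊗ₜ[R] z
        = (groupAlgebraAntipode R A g' ⊗ₜ[R] groupAlgebraAntipode R A g') * (g ⊗ₜ[R] g) := by
      rw [Algebra.TensorProduct.tmul_mul_tmul, hzdef]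
    have e2 : groupAlgebraComul R A z - z ⊗ₜ[R] z
        = (TensorProduct.map (gaAntipodeL R A) (gaAntipodeL R A)
              (groupAlgebraComul R A g' - g' ⊗ₜ[R] g')) * groupAlgebraComul R A g
          + (groupAlgebraAntipode R A g' ⊗ₜ[R] groupAlgebraAntipode R A g')
              * (groupAlgebraComul R A g - g ⊗ₜ[R] g) := by
      rw [e1, e3, map_sub, TensorProduct.map_tmul, gaAntipodeL_eq]
      ring
    rw [e2]
    refine add_mem ?_ (mixed_mul_mem I hggl _)
    rw [mul_comm]
    exact mixed_mul_mem I hm2' _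
  -- the antipode of g' is an inverse of g' modulo I
  have hSg'g' : groupAlgebraAntipode R A g' * g' - 1 ∈ I := by
    have hc := mixed_collapse I hSI hg'gl
    rw [map_sub, map_sub, TensorProduct.map_tmul, LinearMap.mul'_apply, LinearMap.id_coe,
      id_eq, gaAntipode_convolution, gaAntipodeL_eq, hg'1, map_one] at hc
    have := neg_mem hc
    rwa [neg_sub] at this
  -- z^d - 1 lies in I
  have hzd : z ^ Fintype.card A - 1 ∈ I := by
    have hp := pow_sub_psi I hcounit hcomul hεz hzgl (Fintype.card A)
    rwa [gaPsi_card, hεz, map_one] at hp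
  -- z - 1 lies in mR[A] + I
  have hJ : z - 1 ∈
      Ideal.map (algebraMap R (AddMonoidAlgebra R A)) (IsLocalRing.maximalIdeal R) + I := by
    have h1 : z - 1 = groupAlgebraAntipode R A g' * (g - g')
        + (groupAlgebraAntipode R A g' * g' - 1) := by
      rw [hzdef]; ring
    rw [h1]
    exact add_mem (Ideal.mul_mem_left _ _ hgm)
      ((Submodule.mem_sup_right : _ ∈ I → _) hSg'g')
  -- pass to the quotient Q = R[A]/I
  set πa : AddMonoidAlgebra R A →ₐ[R] (AddMonoidAlgebra R A ⧸ I) :=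
    Ideal.Quotient.mkₐ R I with hπdef
  set v : AddMonoidAlgebra R A ⧸ I := πa z with hvdef
  set K : Ideal (AddMonoidAlgebra R A ⧸ I) :=
    Ideal.map (algebraMap R (AddMonoidAlgebra R A ⧸ I)) (IsLocalRing.maximalIdeal R)
    with hKdef
  have hvd : v ^ Fintype.card A = 1 := by
    have h2 : πa (z ^ Fintype.card A) = πa 1 := by
      rw [hπdef, Ideal.Quotient.mkₐ_eq_mk, Ideal.Quotient.eq]
      exact hzd
    rw [map_pow, map_one] at h2
    exact h2
  have hcomp : (Ideal.Quotient.mk I).comp (algebraMap R (AddMonoidAlgebra R A))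
      = algebraMap R (AddMonoidAlgebra R A ⧸ I) := by
    rw [← Ideal.Quotient.algebraMap_eq I, ← IsScalarTower.algebraMap_eq]
  have hvK : v - 1 ∈ K := by
    rw [Submodule.add_eq_sup] at hJ
    obtain ⟨u, hu, i, hi, huiz⟩ := Submodule.mem_sup.mp hJ
    have h2 : v - 1 = πa u := by
      rw [hvdef, ← map_one πa, ← map_sub, ← huiz, map_add]
      have h3 : πa i = 0 := by
        rw [hπdef, Ideal.Quotient.mkₐ_eq_mk, Ideal.Quotient.eq_zero_iff_mem]
        exact hi
      rw [h3, add_zero]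
    rw [h2, hπdef, Ideal.Quotient.mkₐ_eq_mk, hKdef, ← hcomp, ← Ideal.map_map]
    exact Ideal.mem_map_of_mem _ hu
  -- Q is a finite R-module
  have hQfin : Module.Finite R (AddMonoidAlgebra R A ⧸ I) := by
    refine Module.Finite.of_surjective
      (Finsupp.linearCombination R fun a : A => πa (AddMonoidAlgebra.single a 1)) ?_
    intro q
    obtain ⟨x, rfl⟩ := Ideal.Quotient.mkₐ_surjective R I q
    refine ⟨x.coeff, ?_⟩
    rw [Finsupp.linearCombination_apply]
    conv_rhs => rw [← AddMonoidAlgebra.sum_coeff_single x]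
    rw [map_finsuppSum]
    refine Finsupp.sum_congr fun a _ => ?_
    rw [← map_smul, AddMonoidAlgebra.smul_single', mul_one]
  -- Nakayama
  set L : (AddMonoidAlgebra R A ⧸ I) →ₗ[R] (AddMonoidAlgebra R A ⧸ I) :=
    LinearMap.mulLeft R (v - 1) with hLdef
  set N : Submodule R (AddMonoidAlgebra R A ⧸ I) := LinearMap.range L with hNdef
  have hNfg : N.FG := by
    rw [hNdef, LinearMap.range_eq_map]
    exact Submodule.FG.map _ (Module.finite_def.mp hQfin)
  set c : R := ↑hd.unit⁻¹ with hcdef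
  have hcd : c * (Fintype.card A : R) = 1 := by
    rw [hcdef]
    exact hd.val_inv_mul
  set s : AddMonoidAlgebra R A ⧸ I := ∑ i ∈ Finset.range (Fintype.card A), v ^ i with hsdef
  have hvs : (v - 1) * s = 0 := by
    rw [mul_comm, hsdef, geom_sum_mul, hvd, sub_self]
  have hsK : s - (Fintype.card A : ℕ) • (1 : AddMonoidAlgebra R A ⧸ I) ∈ K := by
    have e : s - (Fintype.card A : ℕ) • (1 : AddMonoidAlgebra R A ⧸ I)
        = ∑ i ∈ Finset.range (Fintype.card A), (v ^ i - 1) := by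
      rw [Finset.sum_sub_distrib, Finset.sum_const, Finset.card_range]
    rw [e]
    refine Submodule.sum_mem _ fun i _ => ?_
    have h4 : v ^ i - 1 = (∑ j ∈ Finset.range i, v ^ j) * (v - 1) := (geom_sum_mul v i).symm
    rw [h4]
    exact K.mul_mem_left _ hvK
  set w : AddMonoidAlgebra R A ⧸ I := c • s with hwdef
  have h0w : (v - 1) * w = 0 := by
    rw [hwdef, mul_smul_comm, hvs, smul_zero]
  have hs1K : (1 : AddMonoidAlgebra R A ⧸ I) - w ∈ K := by
    have h1 : (1 : AddMonoidAlgebra R A ⧸ I) - w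
        = c • ((Fintype.card A : ℕ) • (1 : AddMonoidAlgebra R A ⧸ I) - s) := by
      rw [hwdef, smul_sub, ← Nat.cast_smul_eq_nsmul R, smul_smul, hcd, one_smul]
    rw [h1]
    refine Submodule.smul_of_tower_mem K c ?_
    rw [← neg_sub]
    exact neg_mem hsK
  have hKN : ∀ k ∈ K, ∀ q : AddMonoidAlgebra R A ⧸ I,
      (v - 1) * (k * q) ∈ (IsLocalRing.maximalIdeal R) • N := by
    intro k hk
    have hk' : k ∈ Ideal.span ((algebraMap R (AddMonoidAlgebra R A ⧸ I)) ''
        (IsLocalRing.maximalIdeal R)) := hk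
    clear hk
    induction hk' using Submodule.span_induction with
    | mem x hx =>
        obtain ⟨m₀, hm₀, rfl⟩ := hx
        intro q
        rw [mul_left_comm, ← Algebra.smul_def]
        exact Submodule.smul_mem_smul hm₀ (LinearMap.mem_range.mpr ⟨q, rfl⟩)
    | zero => intro q; rw [zero_mul, mul_zero]; exact zero_mem _
    | add a b _ _ ha hb => intro q; rw [add_mul, mul_add]; exact add_mem (ha q) (hb q)
    | smul a x _ hx => intro q; rw [smul_eq_mul, mul_assoc, mul_left_comm a x q]; exact hx (a * q)
  have hNle : N ≤ (IsLocalRing.maximalIdeal R) • N := by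
    rintro y ⟨q, rfl⟩
    have hLq : L q = (v - 1) * q := rfl
    have e1 : (v - 1) * (((1 : AddMonoidAlgebra R A ⧸ I) - w) * q)
        = (v - 1) * q - ((v - 1) * w) * q := by ring
    rw [h0w, zero_mul, sub_zero] at e1
    have e : L q = (v - 1) * (((1 : AddMonoidAlgebra R A ⧸ I) - w) * q) := by
      rw [hLq, e1]
    rw [e]
    exact hKN _ hs1K q
  have hjac : IsLocalRing.maximalIdeal R ≤ Ideal.jacobson ⊥ := by
    rw [IsLocalRing.jacobson_eq_maximalIdeal ⊥ bot_ne_top]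
  have hN0 : N = ⊥ :=
    Submodule.eq_bot_of_le_smul_of_le_jacobson_bot (IsLocalRing.maximalIdeal R) N hNfg hNle hjac
  have hvN : v - 1 ∈ N :=
    LinearMap.mem_range.mpr ⟨1, by rw [hLdef, LinearMap.mulLeft_apply, mul_one]⟩
  rw [hN0, Submodule.mem_bot] at hvN
  -- hence z - 1 ∈ I
  have hzI : z - 1 ∈ I := by
    have h5 : πa (z - 1) = 0 := by
      rw [map_sub, map_one, ← hvdef, hvN]
    rwa [hπdef, Ideal.Quotient.mkₐ_eq_mk, Ideal.Quotient.eq_zero_iff_mem] at h5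
  -- conclude
  have e : g - g' = g' * (z - 1) - (groupAlgebraAntipode R A g' * g' - 1) * g := by
    rw [hzdef]; ring
  rw [e]
  exact sub_mem (I.mul_mem_left g' hzI) (I.mul_mem_right g hSg'g')
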